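/- (Theorem 4.1) Consider the island Feynman-Kac model on the product spaces X_n^{N1} built from the ε-bootstrap particle kernels boldM_{n+1}(x, dy) = ∏_{i=1}^{N1} (S_{n,m(x)} M_{n+1})(x^i, dy^i) (where m(x) is the empirical measure of x), the potentials boldG_n(x) = N1^{-1} Σ_{i=1}^{N1} G_n(x^i), and initial distribution η_0^{⊗N1}: its unnormalized measures are boldΓ_n(F) = E[F(ξ_n) ∏_{0≤p<n} boldG_p(ξ_p)] and boldη_n = boldΓ_n / boldΓ_n(1), for the Markov chain (ξ_n) with these transitions and initial law. Then for any bounded measurable f on X_n and F(x) = N1^{-1} Σ_{i=1}^{N1} f(x^i), one has boldΓ_n(F) = γ_n(f) and boldη_n(F) = η_n(f). -/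

import Mathlib

open MeasureTheory ProbabilityTheory Filter Finset
open scoped ENNReal NNReal Topology Classical

noncomputable section

namespace FKisland

/-- Unnormalized Feynman-Kac measures `γ_n`:
`γ_0 = init` and `γ_{n+1}(f) = γ_n (G_n ⋅ step_{n+1} f)`. -/
def gammaSeq {S : ℕ → Type*} [∀ n, MeasurableSpace (S n)]
    (init : Measure (S 0)) (step : ∀ n, S n → Measure (S (n + 1)))
    (G : ∀ n, S n → ℝ) : (n : ℕ) → Measure (S n)
  | 0 => init
  | n + 1 => ((gammaSeq init step G n).withDensity
      (fun x => ENNReal.ofReal (G n x))).bind (step n)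

/-- Normalized Feynman-Kac measures `η_n = γ_n / γ_n(1)`. -/
def etaSeq {S : ℕ → Type*} [∀ n, MeasurableSpace (S n)]
    (init : Measure (S 0)) (step : ∀ n, S n → Measure (S (n + 1)))
    (G : ∀ n, S n → ℝ) (n : ℕ) : Measure (S n) :=
  (gammaSeq init step G n Set.univ)⁻¹ • gammaSeq init step G n

/-- Feynman-Kac semigroup `Q_{p,p+k} = Q_{p+1} Q_{p+2} ⋯ Q_{p+k}` acting on functions,
where `Q_{l+1} g (x) = G_l(x) ∫ g(y) step_l(x,dy)`. -/
def Qop {S : ℕ → Type*} [∀ n, MeasurableSpace (S n)]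
    (step : ∀ n, S n → Measure (S (n + 1))) (G : ∀ n, S n → ℝ) :
    (p k : ℕ) → (S (p + k) → ℝ) → S p → ℝ
  | _, 0, f => f
  | p, k + 1, f => Qop step G p k (fun x => G (p + k) x * ∫ y, f y ∂(step (p + k) x))

/-- `Q_{p,n}` for `p ≤ n`. -/
def Qle {S : ℕ → Type*} [∀ n, MeasurableSpace (S n)]
    (step : ∀ n, S n → Measure (S (n + 1))) (G : ∀ n, S n → ℝ)
    {p n : ℕ} (h : p ≤ n) (f : S n → ℝ) : S p → ℝ :=
  Qop step G p (n - p) (fun y => f (cast (congrArg S (Nat.add_sub_cancel' h)) y))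

/-- Normalized semigroup `Q̄_{p,p+k} = Q_{p,p+k} / η_p(Q_{p,p+k} 1)`. -/
def Qbar {S : ℕ → Type*} [∀ n, MeasurableSpace (S n)]
    (init : Measure (S 0)) (step : ∀ n, S n → Measure (S (n + 1)))
    (G : ∀ n, S n → ℝ) (p k : ℕ) (f : S (p + k) → ℝ) : S p → ℝ :=
  fun x => Qop step G p k f x /
    ∫ z, Qop step G p k (fun _ => (1 : ℝ)) z ∂(etaSeq init step G p)

/-- Normalized semigroup `Q̄_{p,n}` for `p ≤ n`. -/
def Qbarle {S : ℕ → Type*} [∀ n, MeasurableSpace (S n)]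
    (init : Measure (S 0)) (step : ∀ n, S n → Measure (S (n + 1)))
    (G : ∀ n, S n → ℝ) {p n : ℕ} (h : p ≤ n) (f : S n → ℝ) : S p → ℝ :=
  fun x => Qle step G h f x /
    ∫ z, Qle step G h (fun _ => (1 : ℝ)) z ∂(etaSeq init step G p)

/-- Boltzmann-Gibbs transformation `Ψ(μ)(dx) = G(x) μ(dx) / μ(G)`. -/
def boltzmannGibbs {α : Type*} [MeasurableSpace α] (G : α → ℝ) (μ : Measure α) :
    Measure α :=
  (∫⁻ x, ENNReal.ofReal (G x) ∂μ)⁻¹ • μ.withDensity fun x => ENNReal.ofReal (G x)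

/-- One bootstrap selection/mutation step (`boldM_{n+1}`): each of the `N` new particles is
drawn independently from the mixture `Σ_j G(x^j) M(x^j, ⋅) / Σ_k G(x^k)`. -/
def bootStep {α β : Type*} [MeasurableSpace α] [MeasurableSpace β]
    (M : α → Measure β) (G : α → ℝ) {N : ℕ} (x : Fin N → α) :
    Measure (Fin N → β) :=
  Measure.pi fun _ : Fin N =>
    (∑ k, ENNReal.ofReal (G (x k)))⁻¹ • ∑ j, ENNReal.ofReal (G (x j)) • M (x j)

/-- ε-bootstrap selection kernel
`S_{n,μ}(x, ⋅) = ε G(x) δ_x + (1 - ε G(x)) Ψ(μ)`. -/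
def epsSelect {α : Type*} [MeasurableSpace α]
    (G : α → ℝ) (ε : ℝ) (μ : Measure α) (x : α) : Measure α :=
  ENNReal.ofReal (ε * G x) • Measure.dirac x
    + ENNReal.ofReal (1 - ε * G x) • boltzmannGibbs G μ

/-- Empirical measure of a configuration. -/
def empMeasure {α : Type*} [MeasurableSpace α] {N : ℕ} (x : Fin N → α) : Measure α :=
  (N : ℝ≥0∞)⁻¹ • ∑ i, Measure.dirac (x i)

/-- One ε-bootstrap particle step: coordinate `i` moves with `S_{n, m(x)} M` started at `x^i`. -/
def epsBootStep {α β : Type*} [MeasurableSpace α] [MeasurableSpace β]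
    (M : α → Measure β) (G : α → ℝ) (ε : ℝ) {N : ℕ} (x : Fin N → α) :
    Measure (Fin N → β) :=
  Measure.pi fun i : Fin N => (epsSelect G ε (empMeasure x) (x i)).bind M

/-- One ESS particle step on weighted configurations: if the effective sample size
`(Σ w G)² / Σ (wG)²` is at least `a N`, keep the particles (mutating them) and multiply the
weights by the potential; otherwise resample multinomially and reset all weights to 1. -/
def essStep {α β : Type*} [MeasurableSpace α] [MeasurableSpace β]
    (M : α → Measure β) (G : α → ℝ) (a : ℝ) {N : ℕ} (xw : Fin N → α × ℝ) :
    Measure (Fin N → β × ℝ) :=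
  if (∑ i, (xw i).2 * G (xw i).1) ^ 2 / (∑ i, ((xw i).2 * G (xw i).1) ^ 2) ≥ a * N then
    Measure.pi fun i : Fin N => (M (xw i).1).map fun y => (y, (xw i).2 * G (xw i).1)
  else
    Measure.pi fun _ : Fin N =>
      ((∑ k, ENNReal.ofReal ((xw k).2 * G (xw k).1))⁻¹ •
          ∑ j, ENNReal.ofReal ((xw j).2 * G (xw j).1) • M (xw j).1).map
        fun y => (y, (1 : ℝ))

/-- The process `ξ` on the time-varying state spaces `S n` is a Markov chain with initial
law `init` and transition steps `step`, characterized through products of bounded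
measurable functionals of the path. -/
def IsMarkovApprox {Ω : Type*} [MeasurableSpace Ω] (P : Measure Ω)
    {S : ℕ → Type*} [∀ n, MeasurableSpace (S n)]
    (init : Measure (S 0)) (step : ∀ n, S n → Measure (S (n + 1)))
    (ξ : ∀ n, Ω → S n) : Prop :=
  (∀ n, Measurable (ξ n)) ∧
  P.map (ξ 0) = init ∧
  ∀ (n : ℕ) (F : ∀ p, S p → ℝ),
    (∀ p, Measurable (F p)) → (∀ p, ∃ C, ∀ x, |F p x| ≤ C) →
    ∀ (H : S (n + 1) → ℝ), Measurable H → (∃ C, ∀ x, |H x| ≤ C) →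
      ∫ ω, (∏ p ∈ Finset.range (n + 1), F p (ξ p ω)) * H (ξ (n + 1) ω) ∂P
        = ∫ ω, (∏ p ∈ Finset.range (n + 1), F p (ξ p ω)) *
            ∫ y, H y ∂(step n (ξ n ω)) ∂P

/-- Bootstrap local sampling errors `W_p^{N1}` along a configuration path `ξ`:
`W_0^{N1}(g) = √N1 (η_0^{N1}(g) - η_0(g))` and for `p ≥ 1`,
`W_p^{N1}(g) = √N1 (η_p^{N1}(g) - Φ_p(η_{p-1}^{N1})(g))` with `Φ_p(μ) = Ψ_{p-1}(μ) M_p`. -/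
def localW {X : ℕ → Type*} [∀ n, MeasurableSpace (X n)]
    (η0 : Measure (X 0)) (M : ∀ n, Kernel (X n) (X (n + 1))) (G : ∀ n, X n → ℝ)
    (N1 : ℕ) (ξ : ∀ p, Fin N1 → X p) : (p : ℕ) → (X p → ℝ) → ℝ
  | 0, g => Real.sqrt N1 * (((N1 : ℝ)⁻¹ * ∑ i, g (ξ 0 i)) - ∫ x, g x ∂η0)
  | p + 1, g => Real.sqrt N1 * (((N1 : ℝ)⁻¹ * ∑ i, g (ξ (p + 1) i))
      - (∑ i, G p (ξ p i) * ∫ y, g y ∂(M p (ξ p i))) / ∑ i, G p (ξ p i))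

end FKisland

open FKisland

section


namespace FKaux

variable {α β : Type*} [MeasurableSpace α] [MeasurableSpace β]

lemma integrable_of_bdd {μ : Measure α} [IsFiniteMeasure μ] {f : α → ℝ}
    (hf : AEStronglyMeasurable f μ) {D : ℝ} (hb : ∀ x, |f x| ≤ D) : Integrable f μ :=
  (integrable_const D).mono' hf (Filter.Eventually.of_forall fun x => by
    simpa [Real.norm_eq_abs] using hb x)

lemma pi_map_eval {ι : Type*} [Fintype ι] {γ : ι → Type*} [∀ i, MeasurableSpace (γ i)]
    (ν : ∀ i, Measure (γ i)) [∀ i, IsProbabilityMeasure (ν i)] (i : ι) :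
    (Measure.pi ν).map (Function.eval i) = ν i := by
  ext s hs
  rw [Measure.map_apply (measurable_pi_apply i) hs]
  have h : (Function.eval i ⁻¹' s : Set (∀ j, γ j)) =
      Set.pi Set.univ (Function.update (fun j => (Set.univ : Set (γ j))) i s) := by
    rw [Set.univ_pi_update_univ]
  rw [h, Measure.pi_pi,
    Finset.prod_eq_single i
      (fun j _ hj => by rw [Function.update_of_ne hj]; exact measure_univ)
      (fun h => absurd (Finset.mem_univ i) h),
    Function.update_self]

lemma isFiniteMeasure_ofReal_smul (c : ℝ) (μ : Measure α) [IsFiniteMeasure μ] :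
    IsFiniteMeasure (ENNReal.ofReal c • μ) := by
  constructor
  rw [Measure.smul_apply, smul_eq_mul]
  exact ENNReal.mul_lt_top ENNReal.ofReal_lt_top (measure_lt_top μ _)

lemma integrable_dirac'' {f : α → ℝ} (hf : StronglyMeasurable f) (a : α) :
    Integrable f (Measure.dirac a) := by
  refine ⟨hf.aestronglyMeasurable, ?_⟩
  rw [HasFiniteIntegral, lintegral_dirac' _ hf.measurable.enorm]
  exact enorm_lt_top

lemma integral_bind_eq (μ : Measure α) [IsFiniteMeasure μ] (κ : Kernel α β) [IsMarkovKernel κ]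
    {f : β → ℝ} (hf : Measurable f) {D : ℝ} (hb : ∀ x, |f x| ≤ D) :
    ∫ y, f y ∂(μ.bind (fun a => κ a)) = ∫ a, ∫ y, f y ∂(κ a) ∂μ := by
  have hbind : μ.bind (fun a => κ a) = (μ ⊗ₘ κ).snd := by
    ext s hs
    rw [Measure.bind_apply hs (κ.measurable.aemeasurable), Measure.snd_apply hs,
      Measure.compProd_apply (measurable_snd hs)]
    rfl
  have hint : Integrable (fun x : α × β => f x.2) (μ ⊗ₘ κ) :=
    integrable_of_bdd ((hf.comp measurable_snd).aestronglyMeasurable) (fun x => hb x.2)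
  rw [hbind, Measure.snd, integral_map measurable_snd.aemeasurable hf.aestronglyMeasurable,
    Measure.integral_compProd hint]

lemma isProbabilityMeasure_bind (μ : Measure α) [IsProbabilityMeasure μ] (κ : Kernel α β)
    [IsMarkovKernel κ] : IsProbabilityMeasure (μ.bind (fun a => κ a)) := by
  constructor
  rw [Measure.bind_apply MeasurableSet.univ (κ.measurable.aemeasurable)]
  simp

end FKaux

section FKaux2

open FKaux

variable {α β : Type*} [MeasurableSpace α] [MeasurableSpace β]
variable {N : ℕ} {G : α → ℝ} {c e : ℝ}

lemma lintegral_emp (hGm : Measurable G) (x : Fin N → α) :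
    ∫⁻ z, ENNReal.ofReal (G z) ∂(empMeasure x)
      = (N : ℝ≥0∞)⁻¹ * ∑ j, ENNReal.ofReal (G (x j)) := by
  rw [empMeasure, lintegral_smul_measure, lintegral_finset_sum_measure]
  simp_rw [lintegral_dirac' _ hGm.ennreal_ofReal]
  rw [smul_eq_mul]

lemma integral_emp (x : Fin N → α) {h : α → ℝ} (hh : Measurable h) :
    ∫ z, h z ∂(empMeasure x) = (N : ℝ)⁻¹ * ∑ j, h (x j) := by
  rw [empMeasure, integral_smul_measure,
    integral_finset_sum_measure (fun i _ => integrable_dirac'' hh.stronglyMeasurable _)]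
  simp_rw [integral_dirac' _ _ hh.stronglyMeasurable]
  try simp [ENNReal.toReal_inv]

variable (hN : 1 ≤ N) (hGm : Measurable G) (hGpos : ∀ z, 0 < G z) (hGle : ∀ z, G z ≤ c)

section

include hN hGpos

lemma sumG_pos (x : Fin N → α) : 0 < ∑ k, G (x k) :=
  Finset.sum_pos (fun j _ => hGpos _) ⟨⟨0, hN⟩, Finset.mem_univ _⟩

include hGm

lemma lintegral_emp_ne_zero (x : Fin N → α) :
    ∫⁻ z, ENNReal.ofReal (G z) ∂(empMeasure x) ≠ 0 := by
  rw [lintegral_emp hGm x]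
  refine mul_ne_zero ?_ ?_
  · simp [Nat.one_le_iff_ne_zero.mp hN, Nat.one_le_iff_ne_zero.mp hN]
  · refine ne_of_gt (lt_of_lt_of_le ?_ (Finset.single_le_sum (f := fun j => ENNReal.ofReal (G (x j)))
      (fun j _ => zero_le) (Finset.mem_univ ⟨0, hN⟩)))
    exact ENNReal.ofReal_pos.mpr (hGpos _)

lemma lintegral_emp_ne_top (x : Fin N → α) :
    ∫⁻ z, ENNReal.ofReal (G z) ∂(empMeasure x) ≠ ⊤ := by
  rw [lintegral_emp hGm x]
  exact ENNReal.mul_ne_top (ENNReal.inv_ne_top.mpr (by simp [Nat.one_le_iff_ne_zero.mp hN]))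
    (by simp [ENNReal.sum_eq_top])

lemma isProbabilityMeasure_bg (x : Fin N → α) :
    IsProbabilityMeasure (boltzmannGibbs G (empMeasure x)) := by
  constructor
  rw [boltzmannGibbs, Measure.smul_apply, withDensity_apply _ MeasurableSet.univ,
    Measure.restrict_univ, smul_eq_mul]
  exact ENNReal.inv_mul_cancel (lintegral_emp_ne_zero hN hGm hGpos x)
    (lintegral_emp_ne_top hN hGm hGpos x)

include hGle

lemma isProbabilityMeasure_epsSelect (he : 0 ≤ e) (hec : e * c ≤ 1) (x : Fin N → α) (y : α) :
    IsProbabilityMeasure (epsSelect G e (empMeasure x) y) := by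
  haveI := isProbabilityMeasure_bg hN hGm hGpos x
  have h0 : 0 ≤ e * G y := mul_nonneg he (hGpos y).le
  have h1 : e * G y ≤ 1 := le_trans (mul_le_mul_of_nonneg_left (hGle y) he) hec
  constructor
  rw [epsSelect, Measure.add_apply, Measure.smul_apply, Measure.smul_apply, smul_eq_mul,
    smul_eq_mul, measure_univ, measure_univ, mul_one, mul_one,
    ← ENNReal.ofReal_add h0 (by linarith), show e * G y + (1 - e * G y) = 1 by ring,
    ENNReal.ofReal_one]

lemma integral_bg (x : Fin N → α) {g : α → ℝ} (hg : Measurable g) :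
    ∫ z, g z ∂(boltzmannGibbs G (empMeasure x))
      = (∑ j, G (x j) * g (x j)) / (∑ k, G (x k)) := by
  have hwd : (empMeasure x).withDensity (fun z => ENNReal.ofReal (G z))
      = (empMeasure x).withDensity (fun z => ((G z).toNNReal : ℝ≥0∞)) := rfl
  have hint : ∫ z, g z ∂((empMeasure x).withDensity (fun z => ENNReal.ofReal (G z)))
      = (N : ℝ)⁻¹ * ∑ j, G (x j) * g (x j) := by
    rw [hwd, integral_withDensity_eq_integral_smul hGm.real_toNNReal g]
    have : ∀ z, (G z).toNNReal • g z = G z * g z := fun z => by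
      rw [NNReal.smul_def, Real.coe_toNNReal _ (hGpos z).le, smul_eq_mul]
    simp_rw [this]
    exact integral_emp x (hGm.mul hg)
  rw [boltzmannGibbs, integral_smul_measure, hint, ENNReal.toReal_inv, lintegral_emp hGm x]
  have hT : (0 : ℝ) < ∑ k, G (x k) := sumG_pos hN hGpos x
  have hN0 : (N : ℝ) ≠ 0 := Nat.cast_ne_zero.mpr (Nat.one_le_iff_ne_zero.mp hN)
  have htr : ((N : ℝ≥0∞)⁻¹ * ∑ j, ENNReal.ofReal (G (x j))).toReal
      = (N : ℝ)⁻¹ * ∑ k, G (x k) := by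
    rw [ENNReal.toReal_mul, ENNReal.toReal_inv, ENNReal.toReal_natCast,
      ENNReal.toReal_sum (fun j _ => ENNReal.ofReal_ne_top)]
    congr 1
    exact Finset.sum_congr rfl fun j _ => ENNReal.toReal_ofReal (hGpos (x j)).le
  rw [htr, smul_eq_mul]
  rw [eq_div_iff hT.ne']
  field_simp

end

end FKaux2
section FKaux3

open FKaux

variable {α β : Type*} [MeasurableSpace α] [MeasurableSpace β]
variable {N : ℕ} {G : α → ℝ} {c e : ℝ}

variable (hN : 1 ≤ N) (hGm : Measurable G) (hGpos : ∀ z, 0 < G z) (hGle : ∀ z, G z ≤ c)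
  (he : 0 ≤ e) (hec : e * c ≤ 1)

include hN hGm hGpos hGle he hec

lemma integral_epsSelect (x : Fin N → α) (y : α) {g : α → ℝ} (hg : Measurable g)
    {D : ℝ} (hb : ∀ z, |g z| ≤ D) :
    ∫ z, g z ∂(epsSelect G e (empMeasure x) y)
      = e * G y * g y
        + (1 - e * G y) * ((∑ j, G (x j) * g (x j)) / (∑ k, G (x k))) := by
  haveI := isProbabilityMeasure_bg hN hGm hGpos x
  have h0 : 0 ≤ e * G y := mul_nonneg he (hGpos y).le
  have h1 : e * G y ≤ 1 := le_trans (mul_le_mul_of_nonneg_left (hGle y) he) hec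
  haveI := isFiniteMeasure_ofReal_smul (e * G y) (Measure.dirac y)
  haveI := isFiniteMeasure_ofReal_smul (1 - e * G y) (boltzmannGibbs G (empMeasure x))
  rw [epsSelect, integral_add_measure
    (integrable_of_bdd hg.aestronglyMeasurable hb)
    (integrable_of_bdd hg.aestronglyMeasurable hb),
    integral_smul_measure, integral_smul_measure,
    integral_dirac' _ _ hg.stronglyMeasurable, integral_bg hN hGm hGpos hGle x hg,
    ENNReal.toReal_ofReal h0, ENNReal.toReal_ofReal (by linarith), smul_eq_mul, smul_eq_mul]

lemma avg_integral_epsSelect (x : Fin N → α) {g : α → ℝ} (hg : Measurable g)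
    {D : ℝ} (hb : ∀ z, |g z| ≤ D) :
    (N : ℝ)⁻¹ * ∑ i, ∫ z, g z ∂(epsSelect G e (empMeasure x) (x i))
      = (∑ j, G (x j) * g (x j)) / (∑ k, G (x k)) := by
  have hT : (0 : ℝ) < ∑ k, G (x k) := sumG_pos hN hGpos x
  have hN0 : (N : ℝ) ≠ 0 := Nat.cast_ne_zero.mpr (Nat.one_le_iff_ne_zero.mp hN)
  set S : ℝ := ∑ j, G (x j) * g (x j) with hS
  set T : ℝ := ∑ k, G (x k) with hTdef
  have hsum : ∑ i, ∫ z, g z ∂(epsSelect G e (empMeasure x) (x i))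
      = e * S + ((N : ℝ) - e * T) * (S / T) := by
    have : ∀ i : Fin N, ∫ z, g z ∂(epsSelect G e (empMeasure x) (x i))
        = e * G (x i) * g (x i) + (1 - e * G (x i)) * (S / T) := fun i =>
      integral_epsSelect hN hGm hGpos hGle he hec x (x i) hg hb
    rw [Finset.sum_congr rfl fun i _ => this i, Finset.sum_add_distrib]
    congr 1
    · rw [Finset.mul_sum]
      exact Finset.sum_congr rfl fun i _ => by ring
    · rw [← Finset.sum_mul]
      congr 1
      rw [Finset.sum_sub_distrib, Finset.sum_const, Finset.card_univ, Fintype.card_fin,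
        nsmul_eq_mul, mul_one, ← Finset.mul_sum, ← hTdef]
  rw [hsum]
  field_simp
  ring

end FKaux3
section FKaux4

open FKaux

lemma integral_pi_avg {γ : Type*} [MeasurableSpace γ] {N : ℕ} (ν : Fin N → Measure γ)
    [∀ i, IsProbabilityMeasure (ν i)] {g : γ → ℝ} (hg : Measurable g)
    {D : ℝ} (hb : ∀ z, |g z| ≤ D) :
    ∫ y, (N : ℝ)⁻¹ * ∑ i, g (y i) ∂(Measure.pi ν) = (N : ℝ)⁻¹ * ∑ i, ∫ z, g z ∂(ν i) := by
  rw [integral_const_mul]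
  congr 1
  rw [integral_finset_sum (μ := Measure.pi ν) Finset.univ
    (f := fun (i : Fin N) (y : Fin N → γ) => g (y i)) (fun i _ => integrable_of_bdd
    ((hg.comp (measurable_pi_apply i)).aestronglyMeasurable) (fun y => hb (y i)))]
  refine Finset.sum_congr rfl fun i _ => ?_
  rw [← pi_map_eval ν i,
    integral_map (measurable_pi_apply i).aemeasurable hg.aestronglyMeasurable]

lemma key_step {α β : Type*} [MeasurableSpace α] [MeasurableSpace β] {N : ℕ} (hN : 1 ≤ N)
    (κ : Kernel α β) [IsMarkovKernel κ] {G : α → ℝ} {c e : ℝ}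
    (hGm : Measurable G) (hGpos : ∀ z, 0 < G z) (hGle : ∀ z, G z ≤ c)
    (he : 0 ≤ e) (hec : e * c ≤ 1)
    {f : β → ℝ} (hf : Measurable f) {D : ℝ} (hb : ∀ z, |f z| ≤ D)
    (x : Fin N → α) :
    ((N : ℝ)⁻¹ * ∑ i, G (x i)) *
        ∫ y, ((N : ℝ)⁻¹ * ∑ i, f (y i)) ∂(epsBootStep (fun a => κ a) G e x)
      = (N : ℝ)⁻¹ * ∑ j, G (x j) * ∫ z, f z ∂(κ (x j)) := by
  haveI : ∀ i : Fin N,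
      IsProbabilityMeasure ((epsSelect G e (empMeasure x) (x i)).bind fun a => κ a) := fun i => by
    haveI := isProbabilityMeasure_epsSelect hN hGm hGpos hGle he hec x (x i)
    exact FKaux.isProbabilityMeasure_bind _ _
  have hh : Measurable (fun z : α => ∫ w, f w ∂(κ z)) := by
    have : StronglyMeasurable (fun p : α × β => f p.2) :=
      hf.stronglyMeasurable.comp_measurable measurable_snd
    exact this.integral_kernel_prod_right'.measurable
  have hhb : ∀ z, |∫ w, f w ∂(κ z)| ≤ D := fun z => by
    rw [← Real.norm_eq_abs]
    calc ‖∫ w, f w ∂(κ z)‖ ≤ D * ((κ z) Set.univ).toReal :=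
          norm_integral_le_of_norm_le_const
            (Filter.Eventually.of_forall fun w => by simpa [Real.norm_eq_abs] using hb w)
      _ = D := by simp
  have hbind : ∀ i : Fin N,
      ∫ z, f z ∂((epsSelect G e (empMeasure x) (x i)).bind fun a => κ a)
        = ∫ z, (∫ w, f w ∂(κ z)) ∂(epsSelect G e (empMeasure x) (x i)) := fun i => by
    haveI := isProbabilityMeasure_epsSelect hN hGm hGpos hGle he hec x (x i)
    exact integral_bind_eq _ κ hf hb
  rw [epsBootStep, integral_pi_avg _ hf hb, Finset.sum_congr rfl fun i _ => hbind i]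
  have := avg_integral_epsSelect hN hGm hGpos hGle he hec x hh hhb
  rw [show (∑ i, ∫ z, (∫ w, f w ∂(κ z)) ∂(epsSelect G e (empMeasure x) (x i)))
      = (N:ℝ) * (((∑ j, G (x j) * ∫ w, f w ∂(κ (x j))) / (∑ k, G (x k)))) from ?_]
  · have hT : (0 : ℝ) < ∑ k, G (x k) := sumG_pos hN hGpos x
    have hN0 : (N : ℝ) ≠ 0 := Nat.cast_ne_zero.mpr (Nat.one_le_iff_ne_zero.mp hN)
    field_simp
  · have hN0 : (N : ℝ) ≠ 0 := Nat.cast_ne_zero.mpr (Nat.one_le_iff_ne_zero.mp hN)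
    rw [← this]
    field_simp

end FKaux4
section FKaux5

open FKaux

variable {X : ℕ → Type*} [∀ n, MeasurableSpace (X n)]
  (η0 : Measure (X 0)) [IsProbabilityMeasure η0]
  (M : ∀ n, Kernel (X n) (X (n + 1))) [∀ n, IsMarkovKernel (M n)]
  (G : ∀ n, X n → ℝ)

lemma gamma_fin (hGmeas : ∀ n, Measurable (G n)) (hGpos : ∀ n x, 0 < G n x)
    (C : ℕ → ℝ) (hGle : ∀ n x, G n x ≤ C n) :
    ∀ n, IsFiniteMeasure (gammaSeq (S := X) η0 (fun k x => M k x) G n) := by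
  intro n
  induction n with
  | zero => exact inferInstanceAs (IsFiniteMeasure η0)
  | succ n ihn =>
    haveI := ihn
    set γn := gammaSeq (S := X) η0 (fun k x => M k x) G n with hγ
    haveI hwd : IsFiniteMeasure (γn.withDensity fun x => ENNReal.ofReal (G n x)) := by
      refine isFiniteMeasure_withDensity ?_
      refine ne_top_of_le_ne_top ?_ (lintegral_mono
        (fun z => ENNReal.ofReal_le_ofReal (hGle n z)))
      rw [lintegral_const]
      exact ENNReal.mul_ne_top ENNReal.ofReal_ne_top (measure_ne_top _ _)
    constructor
    rw [show gammaSeq (S := X) η0 (fun k x => M k x) G (n + 1)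
        = (γn.withDensity fun x => ENNReal.ofReal (G n x)).bind (fun a => M n a) from rfl,
      Measure.bind_apply MeasurableSet.univ (M n).measurable.aemeasurable]
    calc ∫⁻ a, (M n) a Set.univ ∂(γn.withDensity fun x => ENNReal.ofReal (G n x))
        = ∫⁻ _, 1 ∂(γn.withDensity fun x => ENNReal.ofReal (G n x)) := by
          simp [measure_univ]
      _ < ⊤ := by rw [lintegral_one]; exact measure_lt_top _ _

lemma gamma_rec (hGmeas : ∀ n, Measurable (G n)) (hGpos : ∀ n x, 0 < G n x)
    (C : ℕ → ℝ) (hGle : ∀ n x, G n x ≤ C n) (n : ℕ)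
    {f : X (n + 1) → ℝ} (hf : Measurable f) {D : ℝ} (hb : ∀ x, |f x| ≤ D) :
    ∫ y, f y ∂(gammaSeq (S := X) η0 (fun k x => M k x) G (n + 1))
      = ∫ z, G n z * ∫ y, f y ∂(M n z) ∂(gammaSeq (S := X) η0 (fun k x => M k x) G n) := by
  haveI := gamma_fin η0 M G hGmeas hGpos C hGle n
  set γn := gammaSeq (S := X) η0 (fun k x => M k x) G n with hγ
  haveI hwd : IsFiniteMeasure (γn.withDensity fun x => ENNReal.ofReal (G n x)) := by
    refine isFiniteMeasure_withDensity ?_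
    refine ne_top_of_le_ne_top ?_ (lintegral_mono
      (fun z => ENNReal.ofReal_le_ofReal (hGle n z)))
    rw [lintegral_const]
    exact ENNReal.mul_ne_top ENNReal.ofReal_ne_top (measure_ne_top _ _)
  rw [show gammaSeq (S := X) η0 (fun k x => M k x) G (n + 1)
      = (γn.withDensity fun x => ENNReal.ofReal (G n x)).bind (fun a => M n a) from rfl,
    integral_bind_eq _ (M n) hf hb,
    show γn.withDensity (fun x => ENNReal.ofReal (G n x))
      = γn.withDensity (fun z => ((G n z).toNNReal : ℝ≥0∞)) from rfl,
    integral_withDensity_eq_integral_smul (hGmeas n).real_toNNReal]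
  refine integral_congr_ae (Filter.Eventually.of_forall fun z => ?_)
  show (G n z).toNNReal • (∫ y, f y ∂(M n) z) = G n z * ∫ y, f y ∂(M n) z
  rw [NNReal.smul_def, Real.coe_toNNReal _ (hGpos n z).le, smul_eq_mul]

lemma keyA (hGmeas : ∀ n, Measurable (G n)) (hGpos : ∀ n x, 0 < G n x)
    (C : ℕ → ℝ) (hGle : ∀ n x, G n x ≤ C n)
    (ε : ℕ → ℝ) (hε : ∀ n, 0 ≤ ε n) (hεC : ∀ n, ε n * C n ≤ 1)
    {Ω : Type*} [MeasurableSpace Ω] (P : Measure Ω) [IsProbabilityMeasure P]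
    {N1 : ℕ} (hN1 : 1 ≤ N1)
    (ξ : ∀ p, Ω → (Fin N1 → X p))
    (hchain : IsMarkovApprox (S := fun p => Fin N1 → X p) P
      (Measure.pi fun _ : Fin N1 => η0)
      (fun k x => epsBootStep (fun a => M k a) (G k) (ε k) x) ξ) :
    ∀ (n : ℕ) (f : X n → ℝ), Measurable f → ∀ (D : ℝ), (∀ x, |f x| ≤ D) →
    ∫ ω, ((N1 : ℝ)⁻¹ * ∑ i, f (ξ n ω i)) *
        ∏ p ∈ Finset.range n, ((N1 : ℝ)⁻¹ * ∑ i, G p (ξ p ω i)) ∂P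
      = ∫ x, f x ∂(gammaSeq (S := X) η0 (fun k x => M k x) G n) := by
  have hN0 : (N1 : ℝ) ≠ 0 := Nat.cast_ne_zero.mpr (Nat.one_le_iff_ne_zero.mp hN1)
  have hFlift : ∀ (m : ℕ) (g : X m → ℝ), Measurable g →
      Measurable (fun x : Fin N1 → X m => (N1 : ℝ)⁻¹ * ∑ i, g (x i)) := fun m g hg =>
    measurable_const.mul (Finset.measurable_sum _ fun i _ => hg.comp (measurable_pi_apply i))
  have hFbd : ∀ (m : ℕ) (g : X m → ℝ) (D : ℝ), (∀ z, |g z| ≤ D) →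
      ∀ x : Fin N1 → X m, |(N1 : ℝ)⁻¹ * ∑ i, g (x i)| ≤ D := by
    intro m g D hb x
    rw [abs_mul, abs_inv, Nat.abs_cast]
    calc (N1 : ℝ)⁻¹ * |∑ i, g (x i)| ≤ (N1 : ℝ)⁻¹ * ∑ i, |g (x i)| := by
          refine mul_le_mul_of_nonneg_left (Finset.abs_sum_le_sum_abs _ _) ?_
          positivity
      _ ≤ (N1 : ℝ)⁻¹ * ((N1 : ℝ) * D) := by
          refine mul_le_mul_of_nonneg_left ?_ (by positivity)
          calc ∑ i, |g (x i)| ≤ ∑ _i : Fin N1, D := Finset.sum_le_sum fun i _ => hb (x i)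
            _ = (N1 : ℝ) * D := by
              rw [Finset.sum_const, Finset.card_univ, Fintype.card_fin, nsmul_eq_mul]
      _ = D := by field_simp
  intro n
  induction n with
  | zero =>
    intro f hf D hb
    simp only [Finset.range_zero, Finset.prod_empty, mul_one]
    have hmeas := hFlift 0 f hf
    have h1 : ∫ x, ((N1 : ℝ)⁻¹ * ∑ i, f (x i)) ∂(Measure.pi fun _ : Fin N1 => η0)
        = ∫ ω, ((N1 : ℝ)⁻¹ * ∑ i, f (ξ 0 ω i)) ∂P := by
      have h2 : ∫ x, ((N1 : ℝ)⁻¹ * ∑ i, f (x i)) ∂(P.map (ξ 0))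
          = ∫ ω, ((N1 : ℝ)⁻¹ * ∑ i, f (ξ 0 ω i)) ∂P :=
        integral_map (hchain.1 0).aemeasurable hmeas.aestronglyMeasurable
      rw [hchain.2.1] at h2
      exact h2
    rw [← h1, integral_pi_avg _ hf hb, Finset.sum_const, Finset.card_univ, Fintype.card_fin,
      nsmul_eq_mul, show gammaSeq (S := X) η0 (fun k x => M k x) G 0 = η0 from rfl]
    field_simp
  | succ n ih =>
    intro f hf D hb
    have hh : Measurable (fun z : X n => ∫ w, f w ∂(M n z)) := by
      have : StronglyMeasurable (fun p : X n × X (n + 1) => f p.2) :=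
        hf.stronglyMeasurable.comp_measurable measurable_snd
      exact this.integral_kernel_prod_right'.measurable
    have hhb : ∀ z, |∫ w, f w ∂(M n z)| ≤ D := fun z => by
      rw [← Real.norm_eq_abs]
      calc ‖∫ w, f w ∂(M n z)‖ ≤ D * (((M n) z) Set.univ).toReal :=
            norm_integral_le_of_norm_le_const
              (Filter.Eventually.of_forall fun w => by simpa [Real.norm_eq_abs] using hb w)
        _ = D := by simp
    have hQm : Measurable (fun z : X n => G n z * ∫ w, f w ∂(M n z)) := (hGmeas n).mul hh
    have hQb : ∀ z, |G n z * ∫ w, f w ∂(M n z)| ≤ C n * D := fun z => by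
      rw [abs_mul, abs_of_pos (hGpos n z)]
      exact mul_le_mul (hGle n z) (hhb z) (abs_nonneg _) (le_trans (hGpos n z).le (hGle n z))
    have hstep := hchain.2.2 n (fun p x => (N1 : ℝ)⁻¹ * ∑ i, G p (x i))
      (fun p => hFlift p (G p) (hGmeas p)) (fun p => ⟨C p, hFbd p (G p) (C p) (fun z => by
        rw [abs_of_pos (hGpos p z)]; exact hGle p z)⟩)
      (fun y => (N1 : ℝ)⁻¹ * ∑ i, f (y i)) (hFlift (n + 1) f hf) ⟨D, hFbd (n + 1) f D hb⟩
    calc ∫ ω, ((N1 : ℝ)⁻¹ * ∑ i, f (ξ (n + 1) ω i)) *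
            ∏ p ∈ Finset.range (n + 1), ((N1 : ℝ)⁻¹ * ∑ i, G p (ξ p ω i)) ∂P
        = ∫ ω, (∏ p ∈ Finset.range (n + 1), ((N1 : ℝ)⁻¹ * ∑ i, G p (ξ p ω i))) *
            ((N1 : ℝ)⁻¹ * ∑ i, f (ξ (n + 1) ω i)) ∂P :=
          integral_congr_ae (Filter.Eventually.of_forall fun ω => mul_comm _ _)
      _ = ∫ ω, (∏ p ∈ Finset.range (n + 1), ((N1 : ℝ)⁻¹ * ∑ i, G p (ξ p ω i))) *
            ∫ y, ((N1 : ℝ)⁻¹ * ∑ i, f (y i))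
              ∂(epsBootStep (fun a => M n a) (G n) (ε n) (ξ n ω)) ∂P := hstep
      _ = ∫ ω, ((N1 : ℝ)⁻¹ * ∑ i, (G n (ξ n ω i) * ∫ w, f w ∂(M n (ξ n ω i)))) *
            ∏ p ∈ Finset.range n, ((N1 : ℝ)⁻¹ * ∑ i, G p (ξ p ω i)) ∂P := by
          refine integral_congr_ae (Filter.Eventually.of_forall fun ω => ?_)
          have hk := key_step hN1 (M n) (hGmeas n) (hGpos n) (hGle n) (hε n) (hεC n)
            hf hb (ξ n ω)
          show (∏ p ∈ Finset.range (n + 1), ((N1 : ℝ)⁻¹ * ∑ i, G p (ξ p ω i))) *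
              (∫ y, ((N1 : ℝ)⁻¹ * ∑ i, f (y i))
                ∂(epsBootStep (fun a => M n a) (G n) (ε n) (ξ n ω)))
            = ((N1 : ℝ)⁻¹ * ∑ i, (G n (ξ n ω i) * ∫ w, f w ∂(M n (ξ n ω i)))) *
              ∏ p ∈ Finset.range n, ((N1 : ℝ)⁻¹ * ∑ i, G p (ξ p ω i))
          rw [Finset.prod_range_succ, mul_assoc, hk]
          exact mul_comm _ _
      _ = ∫ z, (G n z * ∫ w, f w ∂(M n z))
            ∂(gammaSeq (S := X) η0 (fun k x => M k x) G n) :=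
          ih _ hQm (C n * D) hQb
      _ = ∫ y, f y ∂(gammaSeq (S := X) η0 (fun k x => M k x) G (n + 1)) :=
          (gamma_rec η0 M G hGmeas hGpos C hGle n hf hb).symm

end FKaux5
/-- **Theorem 4.1.** For the island Feynman-Kac model built from the
ε-bootstrap particle transitions, the potentials `boldG_n(x) = N1⁻¹ Σ_i G_n(x^i)` and
initial law `η_0^{⊗N1}`, and for the lift `F(x) = N1⁻¹ Σ_i f(x^i)`:
`boldΓ_n(F) = γ_n(f)` and `boldη_n(F) = η_n(f)`. -/
theorem statement9 {X : ℕ → Type*} [∀ n, MeasurableSpace (X n)]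
    (η0 : Measure (X 0)) [IsProbabilityMeasure η0]
    (M : ∀ n, Kernel (X n) (X (n + 1))) [∀ n, IsMarkovKernel (M n)]
    (G : ∀ n, X n → ℝ)
    (hGmeas : ∀ n, Measurable (G n))
    (hGpos : ∀ n x, 0 < G n x)
    (C : ℕ → ℝ) (hGle : ∀ n x, G n x ≤ C n)
    (ε : ℕ → ℝ) (hε : ∀ n, 0 ≤ ε n) (hεC : ∀ n, ε n * C n ≤ 1)
    {Ω : Type*} [MeasurableSpace Ω] (P : Measure Ω) [IsProbabilityMeasure P]
    {N1 : ℕ} (hN1 : 1 ≤ N1)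
    (ξ : ∀ p, Ω → (Fin N1 → X p))
    (hchain : IsMarkovApprox (S := fun p => Fin N1 → X p) P
      (Measure.pi fun _ : Fin N1 => η0)
      (fun k x => epsBootStep (fun a => M k a) (G k) (ε k) x) ξ)
    (n : ℕ) (f : X n → ℝ) (hf : Measurable f) (hfb : ∃ D, ∀ x, |f x| ≤ D) :
    (∫ ω, ((N1 : ℝ)⁻¹ * ∑ i, f (ξ n ω i)) *
        ∏ p ∈ Finset.range n, ((N1 : ℝ)⁻¹ * ∑ i, G p (ξ p ω i)) ∂P
      = ∫ x, f x ∂(gammaSeq (S := X) η0 (fun k x => M k x) G n))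
    ∧ (∫ ω, ((N1 : ℝ)⁻¹ * ∑ i, f (ξ n ω i)) *
          ∏ p ∈ Finset.range n, ((N1 : ℝ)⁻¹ * ∑ i, G p (ξ p ω i)) ∂P) /
        (∫ ω, ∏ p ∈ Finset.range n, ((N1 : ℝ)⁻¹ * ∑ i, G p (ξ p ω i)) ∂P)
      = ∫ x, f x ∂(etaSeq (S := X) η0 (fun k x => M k x) G n) := by
  obtain ⟨D, hb⟩ := hfb
  have key := keyA η0 M G hGmeas hGpos C hGle ε hε hεC P hN1 ξ hchain
  have h1 := key n f hf D hb
  haveI := gamma_fin η0 M G hGmeas hGpos C hGle n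
  have hden : ∫ ω, ∏ p ∈ Finset.range n, ((N1 : ℝ)⁻¹ * ∑ i, G p (ξ p ω i)) ∂P
      = ((gammaSeq (S := X) η0 (fun k x => M k x) G n) Set.univ).toReal := by
    have h2 := key n (fun _ => (1 : ℝ)) measurable_const 1 (fun x => by norm_num)
    have h3 : ∫ ω, ((N1 : ℝ)⁻¹ * ∑ _i : Fin N1, (1 : ℝ)) *
          ∏ p ∈ Finset.range n, ((N1 : ℝ)⁻¹ * ∑ i, G p (ξ p ω i)) ∂P
        = ∫ ω, ∏ p ∈ Finset.range n, ((N1 : ℝ)⁻¹ * ∑ i, G p (ξ p ω i)) ∂P := by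
      refine integral_congr_ae (Filter.Eventually.of_forall fun ω => ?_)
      rw [Finset.sum_const, Finset.card_univ, Fintype.card_fin, nsmul_eq_mul, mul_one]
      have hN0 : (N1 : ℝ) ≠ 0 := Nat.cast_ne_zero.mpr (Nat.one_le_iff_ne_zero.mp hN1)
      field_simp
    rw [← h3, h2, integral_const, smul_eq_mul, mul_one]
    rfl
  refine ⟨h1, ?_⟩
  rw [h1, hden, etaSeq, integral_smul_measure, ENNReal.toReal_inv, smul_eq_mul,
    div_eq_mul_inv, mul_comm]
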